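/- If A is an abelian group with cardinality strictly less than 2^{ℵ₀} that contains no element of finite order other than the identity and is reduced (i.e., ⋂_{m∈ℕ} mA = {0}), then every group homomorphism from a completely metrizable topological group H to A has open kernel. -/

import Mathlib

open Filter Topology Metric Classical

namespace ACproof

noncomputable def preSeq {X : Type*} (Φ : (N : ℕ) → (Fin N → X) → X → Prop)
    (hex : ∀ N v, ∃ z, Φ N v z) : (N : ℕ) → Fin N → X
  | 0 => Fin.elim0
  | (N+1) => Fin.snoc (α := fun _ => X) (preSeq Φ hex N) (hex N (preSeq Φ hex N)).choose

theorem exists_adapted_seq {X : Type*} (Φ : (N : ℕ) → (Fin N → X) → X → Prop)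
    (hex : ∀ N v, ∃ z, Φ N v z) :
    ∃ Z : ℕ → X, ∀ N, Φ N (fun k : Fin N => Z k.1) (Z N) := by
  set Z : ℕ → X := fun N => preSeq Φ hex (N+1) (Fin.last N) with hZ
  have hpre : ∀ N (k : Fin N), preSeq Φ hex N k = Z k.1 := by
    intro N
    induction N with
    | zero => exact fun k => k.elim0
    | succ N ih =>
      intro k
      rcases Fin.eq_castSucc_or_eq_last k with ⟨j, rfl⟩ | rfl
      · have : preSeq Φ hex (N+1) j.castSucc = preSeq Φ hex N j := by
          simp only [preSeq, Fin.snoc_castSucc]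
        rw [this, ih j]
        rfl
      · rfl
  refine ⟨Z, fun N => ?_⟩
  have h := (hex N (preSeq Φ hex N)).choose_spec
  have h1 : (fun k : Fin N => Z k.1) = preSeq Φ hex N := by
    funext k; exact (hpre N k).symm
  have h2 : Z N = (hex N (preSeq Φ hex N)).choose := by
    simp only [Z, preSeq, Fin.snoc_last]
  rw [h1, h2]
  exact h

universe uA

lemma no_continuum_inj {A : Type uA} (hcard : Cardinal.mk A < 2 ^ Cardinal.aleph0)
    (g : (ℕ → Bool) → A) : ∃ t t' : ℕ → Bool, t ≠ t' ∧ g t = g t' := by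
  by_contra hco
  push_neg at hco
  have hinj : Function.Injective (fun u : ULift.{uA} (ℕ → Bool) => g u.down) := by
    intro u v huv
    by_cases h : u.down = v.down
    · cases u; cases v; cases h; rfl
    · exact absurd huv (hco _ _ h)
  have hle := Cardinal.mk_le_of_injective hinj
  rw [Cardinal.mk_uLift] at hle
  have h1 : Cardinal.mk (ℕ → Bool) = 2 ^ Cardinal.aleph0 := by
    rw [← Cardinal.mk_bool, ← Cardinal.mk_nat, Cardinal.power_def]
  rw [h1, Cardinal.lift_power, Cardinal.lift_two, Cardinal.lift_aleph0] at hle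
  exact absurd hle (not_le.mpr hcard)




section Algebra

variable {A : Type*} [AddCommGroup A]

/-- factorial as an integer -/
def fZ (n : ℕ) : ℤ := (Nat.factorial n : ℤ)

lemma fZ_zero : fZ 0 = 1 := by simp [fZ]

lemma fZ_succ (n : ℕ) : fZ (n+1) = fZ n * ((n+1 : ℕ) : ℤ) := by
  simp [fZ, Nat.factorial_succ]; ring

lemma zsmul_cancel (htf : ∀ a : A, ∀ n : ℕ, 1 ≤ n → n • a = 0 → a = 0)
    {k : ℤ} (hk : k ≠ 0) {a : A} (h : k • a = 0) : a = 0 := by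
  have hna : (k.natAbs : ℤ) • a = 0 := by
    rcases Int.natAbs_eq k with he | he
    · rw [← he]; exact h
    · have : (k.natAbs : ℤ) • a = -(k • a) := by rw [he]; simp
      rw [this, h, neg_zero]
  rw [natCast_zsmul] at hna
  exact htf a k.natAbs (Nat.one_le_iff_ne_zero.mpr (Int.natAbs_ne_zero.mpr hk)) hna

lemma eq_zero_of_fact_div (hred : ∀ a : A, (∀ m : ℕ, 1 ≤ m → ∃ b : A, m • b = a) → a = 0)
    {a : A} (h : ∀ n : ℕ, ∃ u : A, a = fZ n • u) : a = 0 := by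
  apply hred
  intro m hm
  obtain ⟨u, hu⟩ := h m
  refine ⟨(Nat.factorial (m - 1)) • u, ?_⟩
  have h1 : m * Nat.factorial (m-1) = Nat.factorial m := by
    conv_rhs => rw [show m = (m-1) + 1 by omega]
    rw [Nat.factorial_succ]
    congr 1
    omega
  rw [hu]
  calc m • (m-1).factorial • u = ((m * (m-1).factorial : ℕ)) • u := by rw [mul_smul]
  _ = fZ m • u := by rw [h1, fZ, natCast_zsmul]

def Coherent (ν : ℕ → ℤ) : Prop := ∀ n : ℕ, fZ n ∣ ν (n+1) - ν n

def Sol (c : A) (ν : ℕ → ℤ) (ξ : A) : Prop := ∀ n : ℕ, ∃ u : A, ξ - ν n • c = fZ n • u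

def Ann (c : A) (ν : ℕ → ℤ) : Prop := ∀ n : ℕ, ∃ u : A, ν n • c = fZ n • u

variable (InC : A → Prop)

lemma exists_sol
    (hchain : ∀ γ : ℕ → A, (∀ n, InC (γ n)) →
      ∃ ξ : ℕ → A, ∀ n, ξ n = γ n + (((n+1 : ℕ)) : ℤ) • ξ (n+1))
    (hzs : ∀ (k : ℤ) (a : A), InC a → InC (k • a))
    {c : A} (hc : InC c) {ν : ℕ → ℤ} (hν : Coherent ν) : ∃ ξ, Sol c ν ξ := by
  set d : ℕ → ℤ := fun n => (ν (n+1) - ν n) / fZ n with hdd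
  have hd : ∀ n, fZ n * d n = ν (n+1) - ν n := fun n => Int.mul_ediv_cancel' (hν n)
  obtain ⟨ξ, hξ⟩ := hchain (fun n => d n • c) (fun n => hzs _ _ hc)
  have key : ∀ n, ξ 0 = (ν n - ν 0) • c + fZ n • ξ n := by
    intro n
    induction n with
    | zero => rw [fZ_zero, sub_self, zero_smul, one_smul, zero_add]
    | succ n ih =>
      rw [ih, hξ n, smul_add, smul_smul, smul_smul, hd n, ← fZ_succ, ← add_assoc, ← add_smul]
      congr 2
      ring
  refine ⟨ξ 0 + ν 0 • c, fun n => ⟨ξ n, ?_⟩⟩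
  rw [key n, sub_smul]
  abel

lemma sol_unique (hred : ∀ a : A, (∀ m : ℕ, 1 ≤ m → ∃ b : A, m • b = a) → a = 0)
    {c : A} {ν : ℕ → ℤ} {ξ ξ' : A} (h : Sol c ν ξ) (h' : Sol c ν ξ') : ξ = ξ' := by
  have h0 : ξ - ξ' = 0 := by
    apply eq_zero_of_fact_div hred
    intro n
    obtain ⟨u, hu⟩ := h n
    obtain ⟨u', hu'⟩ := h' n
    exact ⟨u - u', by rw [smul_sub, ← hu, ← hu']; abel⟩
  exact sub_eq_zero.mp h0

lemma sol_sub {c : A} {ν ν' : ℕ → ℤ} {ξ ξ' : A} (h : Sol c ν ξ) (h' : Sol c ν' ξ') :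
    Sol c (ν - ν') (ξ - ξ') := by
  intro n
  obtain ⟨u, hu⟩ := h n
  obtain ⟨u', hu'⟩ := h' n
  refine ⟨u - u', ?_⟩
  rw [smul_sub, ← hu, ← hu']
  simp [sub_smul]
  abel

lemma sol_mul_const {c : A} {ν : ℕ → ℤ} {ξ : A} (k : ℤ) (h : Sol c ν ξ) :
    Sol c (fun n => k * ν n) (k • ξ) := by
  intro n
  obtain ⟨u, hu⟩ := h n
  refine ⟨k • u, ?_⟩
  show k • ξ - (k * ν n) • c = fZ n • (k • u)
  rw [mul_smul, ← smul_sub, hu, smul_smul, mul_comm, ← smul_smul]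

lemma sol_zero_of_ann (hred : ∀ a : A, (∀ m : ℕ, 1 ≤ m → ∃ b : A, m • b = a) → a = 0)
    {c : A} {ν : ℕ → ℤ} {ξ : A} (hs : Sol c ν ξ) (ha : Ann c ν) : ξ = 0 := by
  apply eq_zero_of_fact_div hred
  intro n
  obtain ⟨u, hu⟩ := hs n
  obtain ⟨u', hu'⟩ := ha n
  exact ⟨u + u', by rw [smul_add, ← hu, ← hu']; abel⟩

lemma ann_of_sol_zero {c : A} {ν : ℕ → ℤ} (hs : Sol c ν 0) : Ann c ν := by
  intro n
  obtain ⟨u, hu⟩ := hs n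
  exact ⟨-u, by rw [smul_neg, ← hu]; abel⟩

def bitz (b : Bool) : ℤ := if b then 1 else 0

lemma prime_pow_smul (InC : A → Prop)
    (htf : ∀ a : A, ∀ n : ℕ, 1 ≤ n → n • a = 0 → a = 0)
    (hred : ∀ a : A, (∀ m : ℕ, 1 ≤ m → ∃ b : A, m • b = a) → a = 0)
    (hchain : ∀ γ : ℕ → A, (∀ n, InC (γ n)) →
      ∃ ξ : ℕ → A, ∀ n, ξ n = γ n + (((n+1 : ℕ)) : ℤ) • ξ (n+1))
    (hzs : ∀ (k : ℤ) (a : A), InC a → InC (k • a))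
    (hpigeon : ∀ g : (ℕ → Bool) → A, ∃ t t' : ℕ → Bool, t ≠ t' ∧ g t = g t')
    (p : ℕ) (hp : p.Prime) (k : ℕ) {c : A} (hc : InC c) :
    ∃ x : A, c = ((p:ℤ)^k) • x := by
  set aF : ℕ → ℕ := fun n => (Nat.factorial n).factorization p with haFdef
  set pZ : ℕ → ℤ := fun n => (p:ℤ)^(aF n) with hpZdef
  set wZ : ℕ → ℤ := fun n => ((Nat.factorial n / p^(aF n) : ℕ) : ℤ) with hwZdef
  have hfact0 : ∀ n : ℕ, Nat.factorial n ≠ 0 := fun n => Nat.factorial_ne_zero n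
  have hmulN : ∀ n : ℕ, p^(aF n) * (Nat.factorial n / p^(aF n)) = Nat.factorial n :=
    fun n => Nat.ordProj_mul_ordCompl_eq_self _ p
  have hmul : ∀ n, pZ n * wZ n = fZ n := by
    intro n
    have hc : pZ n = ((p^(aF n) : ℕ) : ℤ) := by push_cast; ring
    show pZ n * wZ n = fZ n
    rw [hc]
    show ((p^(aF n) : ℕ) : ℤ) * ((Nat.factorial n / p^(aF n) : ℕ) : ℤ) = fZ n
    rw [← Nat.cast_mul, hmulN n]
    rfl
  have hcopN : ∀ n, Nat.Coprime (p^(aF n)) (Nat.factorial n / p^(aF n)) :=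
    fun n => (Nat.coprime_ordCompl hp (hfact0 n)).pow_left _
  have hcop : ∀ n, IsCoprime (pZ n) (wZ n) := by
    intro n
    have := Nat.isCoprime_iff_coprime.mpr (hcopN n)
    simpa [pZ, wZ] using this
  have haF : ∀ n, aF n ≤ aF (n+1) := by
    intro n
    have hd : p ^ (aF n) ∣ p ^ (aF (n+1)) :=
      Nat.ordProj_dvd_ordProj_of_dvd (hfact0 (n+1))
        (Nat.factorial_dvd_factorial (Nat.le_succ n)) p
    exact (Nat.pow_dvd_pow_iff_le_right hp.one_lt).mp hd
  have hpZd : ∀ n, pZ n ∣ pZ (n+1) := fun n => pow_dvd_pow _ (haF n)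
  have hwZd : ∀ n, wZ n ∣ wZ (n+1) := by
    intro n
    show ((Nat.factorial n / p^(aF n) : ℕ) : ℤ) ∣ ((Nat.factorial (n+1) / p^(aF (n+1)) : ℕ) : ℤ)
    exact Int.natCast_dvd_natCast.mpr
      (Nat.ordCompl_dvd_ordCompl_of_dvd (Nat.factorial_dvd_factorial (Nat.le_succ n)) p)
  have hdf : ∀ n {z : ℤ}, pZ n ∣ z → wZ n ∣ z → fZ n ∣ z := by
    intro n z h1 h2
    rw [← hmul n]
    exact (hcop n).mul_dvd h1 h2
  have hEex : ∀ n, ∃ e : ℤ, pZ n ∣ e - 1 ∧ wZ n ∣ e := by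
    intro n
    obtain ⟨u, v, huv⟩ := hcop n
    exact ⟨v * wZ n, ⟨-u, by linear_combination huv⟩, ⟨v, mul_comm _ _⟩⟩
  choose E hE1 hE2 using hEex
  have hEcoh : ∀ n, fZ n ∣ E (n+1) - E n := by
    intro n
    refine hdf n ?_ ?_
    · have h1 : pZ n ∣ E (n+1) - 1 := (hpZd n).trans (hE1 (n+1))
      have h2 := hE1 n
      have he : E (n+1) - E n = (E (n+1) - 1) - (E n - 1) := by ring
      rw [he]
      exact dvd_sub h1 h2
    · exact dvd_sub ((hwZd n).trans (hE2 (n+1))) (hE2 n)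
  -- digit sums
  set Dsum : (ℕ → ℤ) → ℕ → ℤ := fun D n => ∑ i ∈ Finset.range (aF n), D i * (p:ℤ)^i with hDsumdef
  have hDico : ∀ (D : ℕ → ℤ) n, Dsum D (n+1) - Dsum D n
      = ∑ i ∈ Finset.Ico (aF n) (aF (n+1)), D i * (p:ℤ)^i := by
    intro D n
    rw [Finset.sum_Ico_eq_sub _ (haF n)]
  have hDdvd : ∀ (D : ℕ → ℤ) n, pZ n ∣ Dsum D (n+1) - Dsum D n := by
    intro D n
    rw [hDico]
    refine Finset.dvd_sum ?_
    intro i hi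
    rw [Finset.mem_Ico] at hi
    exact Dvd.dvd.mul_left (pow_dvd_pow _ hi.1) (D i)
  have hDcoh : ∀ (D : ℕ → ℤ), Coherent (fun n => E n * Dsum D n) := by
    intro D n
    have h1 : E (n+1) * Dsum D (n+1) - E n * Dsum D n
        = (E (n+1) - E n) * Dsum D (n+1) + E n * (Dsum D (n+1) - Dsum D n) := by ring
    rw [h1]
    refine dvd_add ((hEcoh n).mul_right _) (hdf n ?_ ?_)
    · exact (hDdvd D n).mul_left _
    · exact (hE2 n).mul_right _
  -- pigeonhole
  have hGex : ∀ t : ℕ → Bool, ∃ ξ, Sol c (fun n => E n * Dsum (fun i => bitz (t i)) n) ξ :=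
    fun t => exists_sol InC hchain hzs hc (hDcoh _)
  choose G hG using hGex
  obtain ⟨t, t', htne, hGeq⟩ := hpigeon G
  have hne : ∃ m : ℕ, t m ≠ t' m := by
    by_contra hco
    push_neg at hco
    exact htne (funext hco)
  set j := Nat.find hne with hjdef
  set Δ : ℕ → ℤ := fun i => bitz (t i) - bitz (t' i) with hΔdef
  have hΔ0 : ∀ i, i < j → Δ i = 0 := by
    intro i hi
    have := Nat.find_min hne hi
    push_neg at this
    simp [Δ, this]
  have hΔj : Δ j = 1 ∨ Δ j = -1 := by
    have : t j ≠ t' j := Nat.find_spec hne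
    rcases Bool.eq_false_or_eq_true (t j) with h1 | h1 <;>
      rcases Bool.eq_false_or_eq_true (t' j) with h2 | h2 <;>
        simp [Δ, bitz, h1, h2] at this ⊢
  -- difference is annihilating
  have hsolδ : Sol c ((fun n => E n * Dsum (fun i => bitz (t i)) n)
      - (fun n => E n * Dsum (fun i => bitz (t' i)) n)) 0 := by
    have := sol_sub (hG t) (hG t')
    rwa [hGeq, sub_self] at this
  have hAnnη : Ann c (fun n => E n * Dsum Δ n) := by
    have h := ann_of_sol_zero hsolδ
    intro n
    obtain ⟨u, hu⟩ := h n
    refine ⟨u, ?_⟩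
    rw [← hu]
    congr 1
    show E n * Dsum Δ n = E n * Dsum (fun i => bitz (t i)) n - E n * Dsum (fun i => bitz (t' i)) n
    rw [← mul_sub]
    congr 1
    rw [hDsumdef]
    simp only
    rw [← Finset.sum_sub_distrib]
    congr 1
    funext i
    show Δ i * (p:ℤ)^i = _
    rw [hΔdef]
    ring
  -- shifted sums
  set θ : ℕ → ℤ := fun n => E n * Dsum (fun i => Δ (j + i)) n with hθdef
  have hθcoh : Coherent θ := hDcoh _
  -- claim1
  have claim1 : ∀ n, fZ n ∣ (p:ℤ)^j * θ n - E n * Dsum Δ n := by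
    intro n
    have hexp : (p:ℤ)^j * θ n - E n * Dsum Δ n
        = E n * ((p:ℤ)^j * Dsum (fun i => Δ (j + i)) n - Dsum Δ n) := by
      rw [hθdef]; ring
    rw [hexp]
    refine hdf n ?_ ((hE2 n).mul_right _)
    have hinner : pZ n ∣ (p:ℤ)^j * Dsum (fun i => Δ (j + i)) n - Dsum Δ n := by
      have hshift : (p:ℤ)^j * Dsum (fun i => Δ (j + i)) n
          = ∑ q ∈ Finset.Ico j (j + aF n), Δ q * (p:ℤ)^q := by
        rw [Finset.sum_Ico_eq_sum_range]
        rw [hDsumdef]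
        simp only [Nat.add_sub_cancel_left]
        rw [Finset.mul_sum]
        congr 1
        funext i
        rw [pow_add]
        ring
      rw [hshift]
      rcases le_or_gt (aF n) j with hcase | hcase
      · have hz : Dsum Δ n = 0 := by
          apply Finset.sum_eq_zero
          intro i hi
          rw [Finset.mem_range] at hi
          rw [hΔ0 i (lt_of_lt_of_le hi hcase), zero_mul]
        rw [hz, sub_zero]
        refine Finset.dvd_sum ?_
        intro q hq
        rw [Finset.mem_Ico] at hq
        exact Dvd.dvd.mul_left (pow_dvd_pow _ (le_trans hcase hq.1)) _
      · have hsplit2 : Dsum Δ n = ∑ q ∈ Finset.Ico j (aF n), Δ q * (p:ℤ)^q := by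
          rw [hDsumdef]
          simp only
          rw [Finset.range_eq_Ico, ← Finset.sum_Ico_consecutive _ (Nat.zero_le j) (le_of_lt hcase)]
          have hz : ∑ q ∈ Finset.Ico 0 j, Δ q * (p:ℤ)^q = 0 := by
            apply Finset.sum_eq_zero
            intro i hi
            rw [Finset.mem_Ico] at hi
            rw [hΔ0 i hi.2, zero_mul]
          rw [hz, zero_add]
        have hsplit3 : ∑ q ∈ Finset.Ico j (j + aF n), Δ q * (p:ℤ)^q
            = (∑ q ∈ Finset.Ico j (aF n), Δ q * (p:ℤ)^q)
              + ∑ q ∈ Finset.Ico (aF n) (j + aF n), Δ q * (p:ℤ)^q := by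
          rw [Finset.sum_Ico_consecutive _ (le_of_lt hcase) (by omega)]
        rw [hsplit2, hsplit3, add_sub_cancel_left]
        refine Finset.dvd_sum ?_
        intro q hq
        rw [Finset.mem_Ico] at hq
        exact Dvd.dvd.mul_left (pow_dvd_pow _ hq.1) _
    exact hinner.mul_left _
  -- Ann θ
  obtain ⟨ξθ, hξθ⟩ := exists_sol InC hchain hzs hc hθcoh
  have hsolP : Sol c (fun n => (p:ℤ)^j * θ n) (((p:ℤ)^j) • ξθ) := sol_mul_const _ hξθ
  have hannP : Ann c (fun n => (p:ℤ)^j * θ n) := by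
    intro n
    obtain ⟨u, hu⟩ := hAnnη n
    obtain ⟨q, hq⟩ := claim1 n
    refine ⟨u + q • c, ?_⟩
    have : ((p:ℤ)^j * θ n) • c = (E n * Dsum Δ n) • c + ((p:ℤ)^j * θ n - E n * Dsum Δ n) • c := by
      rw [← add_smul]; congr 1; ring
    rw [this, hu, hq, mul_smul, smul_add]
  have hPz : ((p:ℤ)^j) • ξθ = 0 := sol_zero_of_ann hred hsolP hannP
  have hξθ0 : ξθ = 0 := by
    refine zsmul_cancel htf (a := ξθ) ?_ hPz
    exact pow_ne_zero _ (by exact_mod_cast hp.ne_zero)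
  have hAnnθ : Ann c θ := ann_of_sol_zero (hξθ0 ▸ hξθ)
  -- Ann E
  have hAnnE : ∀ n, ∃ u : A, E n • c = fZ n • u := by
    intro n
    rcases Nat.eq_zero_or_pos (aF n) with ha0 | hapos
    · have hw : fZ n = wZ n := by rw [← hmul n, hpZdef]; simp [ha0]
      obtain ⟨q, hq⟩ := hE2 n
      refine ⟨q • c, ?_⟩
      rw [hq, hw, mul_smul]
    · -- T_n coprime to p
      have hsplitT : Dsum (fun i => Δ (j + i)) n
          = Δ j + (p:ℤ) * (∑ i ∈ Finset.range (aF n - 1), Δ (j + (i+1)) * (p:ℤ)^i) := by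
        rw [hDsumdef]
        simp only
        rw [show aF n = (aF n - 1) + 1 by omega, Finset.sum_range_succ', Finset.mul_sum]
        have h0 : Δ (j+0) * (p:ℤ)^0 = Δ j := by simp
        rw [h0, add_comm]
        congr 1
        refine Finset.sum_congr rfl ?_
        intro i _
        ring
      have hTcop : IsCoprime (Dsum (fun i => Δ (j + i)) n) ((p:ℤ)) := by
        rw [hsplitT]
        rcases hΔj with h1 | h1 <;> rw [h1]
        · have := (isCoprime_one_left (x := (p:ℤ))).add_mul_left_left
            (∑ i ∈ Finset.range (aF n - 1), Δ (j + (i+1)) * (p:ℤ)^i)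
          convert this using 2
        · have := ((isCoprime_one_left (x := (p:ℤ))).neg_left).add_mul_left_left
            (∑ i ∈ Finset.range (aF n - 1), Δ (j + (i+1)) * (p:ℤ)^i)
          convert this using 2
      have hTpow : IsCoprime (Dsum (fun i => Δ (j + i)) n) (pZ n) := hTcop.pow_right
      obtain ⟨γ, δ, hγδ⟩ := hTpow
      have hkey : fZ n ∣ E n - γ * θ n := by
        have hexp : E n - γ * θ n = E n * (δ * pZ n) := by
          rw [hθdef]
          simp only
          have h1 : δ * pZ n = 1 - γ * Dsum (fun i => Δ (j + i)) n := by linear_combination hγδ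
          rw [h1]
          ring
        rw [hexp]
        refine hdf n ?_ ((hE2 n).mul_right _)
        exact Dvd.dvd.mul_left (dvd_mul_left _ _) _
      obtain ⟨u, hu⟩ := hAnnθ n
      obtain ⟨q, hq⟩ := hkey
      refine ⟨γ • u + q • c, ?_⟩
      have hEc : E n • c = (γ * θ n) • c + (E n - γ * θ n) • c := by
        rw [← add_smul]; congr 1; ring
      rw [hEc, hq, mul_smul, hu, mul_smul]
      rw [smul_comm γ (fZ n) u, smul_add]
  -- now the p^k construction
  set q : ℤ := (p:ℤ)^k with hqdef
  have hqcop : ∀ n, IsCoprime q (wZ n) := by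
    intro n
    have h1 : IsCoprime ((p:ℤ)) (wZ n) := by
      have := Nat.isCoprime_iff_coprime.mpr (Nat.coprime_ordCompl hp (hfact0 n))
      simpa [wZ] using this
    exact h1.pow_left
  have hXex : ∀ n, ∃ x : ℤ, wZ n ∣ q * x - 1 := by
    intro n
    obtain ⟨u, v, huv⟩ := hqcop n
    exact ⟨u, ⟨-v, by linear_combination huv⟩⟩
  choose X hX using hXex
  have hαβ := fun n => hcop n
  choose α β hab using hαβ
  set ν : ℕ → ℤ := fun n => X n * α n * pZ n with hνdef
  have hνp : ∀ n, pZ n ∣ ν n := fun n => Dvd.intro_left _ rfl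
  have hνX : ∀ n, wZ n ∣ ν n - X n := by
    intro n
    refine ⟨X n * (-(β n)), ?_⟩
    have h1 : α n * pZ n = 1 - β n * wZ n := by linear_combination hab n
    rw [hνdef]
    simp only
    rw [mul_assoc, h1]
    ring
  have hνcoh : Coherent ν := by
    intro n
    refine hdf n ?_ ?_
    · exact dvd_sub ((hpZd n).trans (hνp (n+1))) (hνp n)
    · have h1 : ν (n+1) - ν n
          = (ν (n+1) - X (n+1)) + (X (n+1) - X n) + (X n - ν n) := by ring
      rw [h1]
      refine dvd_add (dvd_add ((hwZd n).trans (hνX (n+1))) ?_) ?_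
      · -- wZ n ∣ X (n+1) - X n
        have h2 : wZ n ∣ q * (X (n+1) - X n) := by
          have h3 : q * (X (n+1) - X n) = (q * X (n+1) - 1) - (q * X n - 1) := by ring
          rw [h3]
          exact dvd_sub ((hwZd n).trans (hX (n+1))) (hX n)
        exact (hqcop n).symm.dvd_of_dvd_mul_left h2
      · have h4 : X n - ν n = -(ν n - X n) := by ring
        rw [h4]
        exact dvd_neg.mpr (hνX n)
  obtain ⟨ξ, hξ⟩ := exists_sol InC hchain hzs hc hνcoh
  have hζ : ∀ n, fZ n ∣ (1 - q * ν n) - E n := by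
    intro n
    refine hdf n ?_ ?_
    · have h1 : (1 - q * ν n) - E n = -(q * ν n) - (E n - 1) := by ring
      rw [h1]
      exact dvd_sub ((dvd_neg).mpr ((hνp n).mul_left q)) (hE1 n)
    · have h1 : (1 - q * ν n) - E n
          = -(q * X n - 1) - q * (ν n - X n) - E n := by ring
      rw [h1]
      exact dvd_sub (dvd_sub ((dvd_neg).mpr (hX n)) ((hνX n).mul_left q)) (hE2 n)
  have hfin : c - q • ξ = 0 := by
    apply eq_zero_of_fact_div hred
    intro n
    obtain ⟨w1, hw1⟩ := hζ n
    obtain ⟨u2, hu2⟩ := hAnnE n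
    obtain ⟨u3, hu3⟩ := hξ n
    refine ⟨w1 • c + u2 + (-(q • u3)), ?_⟩
    have hdec : c - q • ξ = ((1 - q * ν n) - E n) • c + E n • c + (-(q • (ξ - ν n • c))) := by
      rw [sub_smul, sub_smul, one_smul, smul_sub]
      rw [mul_smul]
      abel
    rw [hdec, hw1, hu2, hu3, smul_add, smul_add, smul_neg, mul_smul, smul_comm q (fZ n) u3]
  refine ⟨ξ, ?_⟩
  show c = q • ξ
  rw [← sub_eq_zero]
  exact hfin

lemma inC_eq_zero (InC : A → Prop)
    (htf : ∀ a : A, ∀ n : ℕ, 1 ≤ n → n • a = 0 → a = 0)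
    (hred : ∀ a : A, (∀ m : ℕ, 1 ≤ m → ∃ b : A, m • b = a) → a = 0)
    (hchain : ∀ γ : ℕ → A, (∀ n, InC (γ n)) →
      ∃ ξ : ℕ → A, ∀ n, ξ n = γ n + (((n+1 : ℕ)) : ℤ) • ξ (n+1))
    (hzs : ∀ (k : ℤ) (a : A), InC a → InC (k • a))
    (hpigeon : ∀ g : (ℕ → Bool) → A, ∃ t t' : ℕ → Bool, t ≠ t' ∧ g t = g t')
    {c : A} (hc : InC c) : c = 0 := by
  have hall : ∀ m : ℕ, 1 ≤ m → ∃ x : A, c = (m : ℤ) • x := by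
    intro m
    induction m using Nat.strong_induction_on with
    | _ m ih =>
      intro hm
      rcases eq_or_lt_of_le hm with h1 | h1
      · exact ⟨c, by rw [← h1]; simp⟩
      · have hm1 : m ≠ 1 := by omega
        have hm0 : m ≠ 0 := by omega
        set p := m.minFac with hpdef
        have hp : p.Prime := Nat.minFac_prime hm1
        set k := m.factorization p with hkdef
        have hk1 : 0 < k := hp.factorization_pos_of_dvd hm0 (Nat.minFac_dvd m)
        set m' := m / p ^ k with hm'def
        have hsplit : p ^ k * m' = m := Nat.ordProj_mul_ordCompl_eq_self m p
        have hm'0 : m' ≠ 0 := Nat.pos_iff_ne_zero.mp (Nat.ordCompl_pos p hm0)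
        have hm'lt : m' < m := by
          apply Nat.div_lt_self (by omega)
          exact Nat.one_lt_pow (by omega) hp.one_lt
        obtain ⟨u, hu⟩ := prime_pow_smul InC htf hred hchain hzs hpigeon p hp k hc
        obtain ⟨v, hv⟩ := ih m' hm'lt (Nat.one_le_iff_ne_zero.mpr hm'0)
        have hcopZ : IsCoprime ((p:ℤ)^k) ((m' : ℕ) : ℤ) := by
          have hN : Nat.Coprime (p^k) m' := (Nat.coprime_ordCompl hp hm0).pow_left k
          have h2 := Nat.isCoprime_iff_coprime.mpr hN
          simpa using h2
        obtain ⟨a, b, hab⟩ := hcopZ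
        refine ⟨a • v + b • u, ?_⟩
        have h2 : ((m:ℕ):ℤ) = (p:ℤ)^k * ((m' : ℕ) : ℤ) := by
          rw [← hsplit]; push_cast; ring
        rw [h2]
        calc c = (a * (p:ℤ)^k + b * ((m' : ℕ):ℤ)) • c := by rw [hab, one_smul]
          _ = (a * (p:ℤ)^k) • c + (b * ((m' : ℕ):ℤ)) • c := by rw [add_smul]
          _ = (a * (p:ℤ)^k) • (((m' : ℕ):ℤ) • v) + (b * ((m' : ℕ):ℤ)) • (((p:ℤ)^k) • u) := by
              rw [← hv, ← hu]
          _ = ((p:ℤ)^k * ((m' : ℕ):ℤ)) • (a • v) + ((p:ℤ)^k * ((m' : ℕ):ℤ)) • (b • u) := by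
              rw [smul_smul, smul_smul, smul_smul, smul_smul]
              congr 1
              · congr 1; ring
              · congr 1; ring
          _ = ((p:ℤ)^k * ((m' : ℕ):ℤ)) • (a • v + b • u) := by rw [← smul_add]
  apply hred
  intro m hm
  obtain ⟨x, hx⟩ := hall m hm
  exact ⟨x, by rw [hx, natCast_zsmul]⟩

end Algebra

section Words

variable {H : Type*} [Group H]

def Taux (z : ℕ → H) : ℕ → ℕ → H
  | 0, _ => 1
  | (k+1), n => z n * (Taux z k (n+1)) ^ (n+1)

lemma Taux_succ (z : ℕ → H) (k n : ℕ) : Taux z (k+1) n = z n * (Taux z k (n+1)) ^ (n+1) := rfl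

lemma Taux_congr (z z' : ℕ → H) (k : ℕ) :
    ∀ n, (∀ j, n ≤ j → j < n + k → z j = z' j) → Taux z k n = Taux z' k n := by
  induction k with
  | zero => intro n _; rfl
  | succ k ih =>
    intro n h
    rw [Taux_succ, Taux_succ, h n le_rfl (by omega),
      ih (n+1) (fun j h1 h2 => h j (by omega) (by omega))]

lemma Taux_innermost_one (z : ℕ → H) (k : ℕ) :
    ∀ n, z (n + k) = 1 → Taux z (k+1) n = Taux z k n := by
  induction k with
  | zero =>
    intro n h
    rw [Taux_succ]
    show z n * (1:H)^(n+1) = 1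
    rw [one_pow, mul_one]
    simpa using h
  | succ k ih =>
    intro n h
    rw [Taux_succ z (k+1) n, Taux_succ z k n, ih (n+1) (by rw [← h]; congr 1; omega)]

lemma Taux_update_cont [TopologicalSpace H] [IsTopologicalGroup H]
    (z : ℕ → H) (m : ℕ) (k : ℕ) :
    ∀ n, Continuous (fun x : H => Taux (Function.update z m x) k n) := by
  induction k with
  | zero => intro n; exact continuous_const
  | succ k ih =>
    intro n
    have : (fun x : H => Taux (Function.update z m x) (k+1) n)
        = fun x => (Function.update z m x n) * (Taux (Function.update z m x) k (n+1)) ^ (n+1) := rfl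
    rw [this]
    refine Continuous.mul ?_ ((ih (n+1)).pow (n+1))
    by_cases h : n = m
    · subst h
      have : (fun x : H => Function.update z n x n) = fun x => x := by
        funext x; simp
      rw [this]
      exact continuous_id
    · have : (fun x : H => Function.update z m x n) = fun _ => z n := by
        funext x; rw [Function.update_of_ne h]
      rw [this]
      exact continuous_const

end Words

section Chain

variable {H : Type*} [Group H] [MetricSpace H] [IsTopologicalGroup H] [CompleteSpace H]
variable {A : Type*} [AddCommGroup A]

lemma chain_machine (φ : H → A) (hφ : ∀ x y : H, φ (x * y) = φ x + φ y)
    (γ : ℕ → A)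
    (hatt : ∀ n, ∀ ε : ℝ, 0 < ε → ∃ x : H, dist x 1 < ε ∧ φ x = γ n) :
    ∃ ξ : ℕ → A, ∀ n, ξ n = γ n + (((n+1 : ℕ)) : ℤ) • ξ (n+1) := by
  classical
  have hφ1 : φ 1 = 0 := by
    have := hφ 1 1
    rw [mul_one] at this
    exact (left_eq_add.mp this)
  have hφpow : ∀ (x : H) (m : ℕ), φ (x ^ m) = m • φ x := by
    intro x m
    induction m with
    | zero => simpa using hφ1
    | succ m ih => rw [pow_succ, hφ, ih, succ_nsmul]
  set ext : (N : ℕ) → (Fin N → H) → H → (ℕ → H) :=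
    fun N v z j => if h : j < N then v ⟨j, h⟩ else if j = N then z else 1 with hextdef
  set Φ : (N : ℕ) → (Fin N → H) → H → Prop := fun N v z =>
    φ z = γ N ∧ ∀ n, n ≤ N → dist (Taux (ext N v 1) (N - n) n) (Taux (ext N v z) (N + 1 - n) n)
      ≤ (1/2 : ℝ)^N with hΦdef
  have hex : ∀ N v, ∃ z, Φ N v z := by
    intro N v
    have hupd : ∀ z : H, ext N v z = Function.update (ext N v 1) N z := by
      intro z; funext j
      by_cases h1 : j < N
      · rw [Function.update_of_ne (by omega)]
        simp [ext, h1]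
      · by_cases h2 : j = N
        · subst h2
          simp [ext, h1]
        · rw [Function.update_of_ne h2]
          simp [ext, h1, h2]
    have hU1mem : ∀ n, n ≤ N → Function.update (ext N v 1) N (1:H) = ext N v 1 := by
      intro n hn
      funext j
      by_cases h2 : j = N
      · subst h2; simp [ext]
      · rw [Function.update_of_ne h2]
    set U : Set H := ⋂ n ∈ Finset.range (N+1),
      {z : H | dist (Taux (ext N v 1) (N - n) n)
        (Taux (Function.update (ext N v 1) N z) (N + 1 - n) n) < (1/2:ℝ)^N} with hU
    have hUopen : IsOpen U := by
      apply isOpen_biInter_finset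
      intro n _
      exact isOpen_lt (continuous_const.dist (Taux_update_cont (ext N v 1) N _ n)) continuous_const
    have hU1 : (1:H) ∈ U := by
      rw [hU]
      simp only [Set.mem_iInter, Set.mem_setOf_eq]
      intro n hn
      rw [hU1mem n (by simp at hn; omega)]
      have hnN : n ≤ N := by simp at hn; omega
      have h3 : Taux (ext N v 1) (N + 1 - n) n = Taux (ext N v 1) (N - n) n := by
        have h4 : N + 1 - n = (N - n) + 1 := by omega
        rw [h4]
        apply Taux_innermost_one
        have h5 : n + (N - n) = N := by omega
        rw [h5]
        simp [ext]
      rw [h3, dist_self]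
      positivity
    obtain ⟨δ, hδ0, hball⟩ := Metric.isOpen_iff.mp hUopen 1 hU1
    obtain ⟨z, hz1, hz2⟩ := hatt N δ hδ0
    refine ⟨z, hz2, ?_⟩
    intro n hn
    have hzU : z ∈ U := hball (Metric.mem_ball.mpr hz1)
    rw [hU] at hzU
    simp only [Set.mem_iInter, Set.mem_setOf_eq] at hzU
    have := hzU n (by simp; omega)
    rw [← hupd z] at this
    exact le_of_lt this
  obtain ⟨Z, hZ⟩ := exists_adapted_seq Φ hex
  have hZcond : ∀ N n, n ≤ N → dist (Taux Z (N - n) n) (Taux Z (N + 1 - n) n) ≤ (1/2:ℝ)^N := by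
    intro N n hn
    have h := (hZ N).2 n hn
    have e1 : Taux (ext N (fun k : Fin N => Z k.1) 1) (N - n) n = Taux Z (N - n) n := by
      apply Taux_congr
      intro j h1 h2
      have h3 : j < N := by omega
      simp [ext, h3]
    have e2 : Taux (ext N (fun k : Fin N => Z k.1) (Z N)) (N + 1 - n) n
        = Taux Z (N + 1 - n) n := by
      apply Taux_congr
      intro j h1 h2
      by_cases h3 : j < N
      · simp [ext, h3]
      · have h4 : j = N := by omega
        subst h4
        simp [ext]
    rw [e1, e2] at h
    exact h
  have hφZ : ∀ N, φ (Z N) = γ N := fun N => (hZ N).1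
  have hcau : ∀ n, CauchySeq (fun k => Taux Z k n) := by
    intro n
    apply cauchySeq_of_le_geometric (1/2 : ℝ) ((1/2:ℝ)^n) (by norm_num)
    intro k
    have h := hZcond (n + k) n (by omega)
    have h1 : n + k - n = k := by omega
    have h2 : n + k + 1 - n = k + 1 := by omega
    rw [h1, h2] at h
    calc dist (Taux Z k n) (Taux Z (k+1) n) ≤ (1/2:ℝ)^(n+k) := h
      _ = (1/2:ℝ)^n * (1/2:ℝ)^k := by rw [pow_add]
  have hlim : ∀ n, ∃ y : H, Tendsto (fun k => Taux Z k n) atTop (𝓝 y) :=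
    fun n => cauchySeq_tendsto_of_complete (hcau n)
  choose y hy using hlim
  have hrel : ∀ n, y n = Z n * (y (n+1))^(n+1) := by
    intro n
    have h1 : Tendsto (fun k => Taux Z (k+1) n) atTop (𝓝 (y n)) :=
      (hy n).comp (tendsto_add_atTop_nat 1)
    have h2 : Tendsto (fun k => Z n * (Taux Z k (n+1))^(n+1)) atTop
        (𝓝 (Z n * (y (n+1))^(n+1))) :=
      tendsto_const_nhds.mul ((hy (n+1)).pow (n+1))
    exact tendsto_nhds_unique h1 h2
  refine ⟨fun n => φ (y n), ?_⟩
  intro n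
  show φ (y n) = γ n + (((n+1:ℕ)) : ℤ) • φ (y (n+1))
  rw [hrel n, hφ, hφZ n, hφpow, natCast_zsmul]

end Chain

section Avoid

variable {H : Type*} [Group H]

def bitz' (b : Bool) : ℤ := if b then 1 else 0

def Qa (x : ℕ → H) (σ : ℕ → Bool) (n : ℕ) : ℕ → H
  | 0 => 1
  | (k+1) => Qa x σ n k * (if σ (n+k) then x (n+k) else 1)

lemma Qa_succ (x : ℕ → H) (σ : ℕ → Bool) (n k : ℕ) :
    Qa x σ n (k+1) = Qa x σ n k * (if σ (n+k) then x (n+k) else 1) := rfl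

lemma Qa_congr (x x' : ℕ → H) (σ σ' : ℕ → Bool) (n : ℕ) : ∀ (k : ℕ),
    (∀ j, n ≤ j → j < n + k → x j = x' j) →
    (∀ j, n ≤ j → j < n + k → σ j = σ' j) → Qa x σ n k = Qa x' σ' n k := by
  intro k
  induction k with
  | zero => intro _ _; rfl
  | succ k ih =>
    intro hx hσ
    rw [Qa_succ, Qa_succ, ih (fun j a b => hx j a (by omega)) (fun j a b => hσ j a (by omega)),
      hσ (n+k) (by omega) (by omega)]
    congr 1
    split_ifs with h
    · exact hx (n+k) (by omega) (by omega)
    · rfl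

lemma Qa_append (x : ℕ → H) (σ : ℕ → Bool) (n : ℕ) : ∀ (k : ℕ),
    Qa x σ 0 (n + k) = Qa x σ 0 n * Qa x σ n k := by
  intro k
  induction k with
  | zero =>
    show Qa x σ 0 (n + 0) = Qa x σ 0 n * 1
    rw [Nat.add_zero, mul_one]
  | succ k ih =>
    have h1 : n + (k+1) = (n+k) + 1 := rfl
    rw [h1, Qa_succ, ih, Qa_succ, mul_assoc, Nat.zero_add]

variable {A : Type*} [AddCommGroup A]

lemma phi_Qa (φ : H → A) (hφ : ∀ x y : H, φ (x * y) = φ x + φ y) (hφ1 : φ 1 = 0)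
    (x : ℕ → H) (σ : ℕ → Bool) (n : ℕ) : ∀ k,
    φ (Qa x σ n k) = ∑ i ∈ Finset.range k, (if σ (n+i) then φ (x (n+i)) else 0) := by
  intro k
  induction k with
  | zero => simpa [Qa] using hφ1
  | succ k ih =>
    rw [Qa_succ, hφ, ih, Finset.sum_range_succ]
    congr 1
    split_ifs
    · rfl
    · exact hφ1

lemma avoid_machine [MetricSpace H] [IsTopologicalGroup H] [CompleteSpace H]
    (φ : H → A) (hφ : ∀ x y : H, φ (x * y) = φ x + φ y)
    (htf : ∀ a : A, ∀ n : ℕ, 1 ≤ n → n • a = 0 → a = 0)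
    (hones : ∀ ε : ℝ, 0 < ε → ∃ x : H, dist x 1 < ε ∧ φ x ≠ 0)
    (havoid : ∀ a : A, a ≠ 0 → ∃ ε : ℝ, 0 < ε ∧ ∀ x : H, dist x 1 < ε → φ x ≠ a) :
    ∃ ψ : (ℕ → Bool) → A, Function.Injective ψ := by
  classical
  have hφ1 : φ 1 = 0 := by
    have := hφ 1 1
    rw [mul_one] at this
    exact (left_eq_add.mp this)
  have hφinv : ∀ t : H, φ t⁻¹ = - φ t := by
    intro t
    have := hφ t t⁻¹
    rw [mul_inv_cancel, hφ1] at this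
    exact eq_neg_of_add_eq_zero_right (add_comm (φ t) (φ t⁻¹) ▸ this.symm)
  -- avoidance radii
  have hεex : ∀ a : A, ∃ e : ℝ, 0 < e ∧ (a ≠ 0 → ∀ x : H, dist x 1 < e → φ x ≠ a) := by
    intro a
    by_cases h : a ≠ 0
    · obtain ⟨e, he, hav⟩ := havoid a h
      exact ⟨e, he, fun _ => hav⟩
    · exact ⟨1, by norm_num, fun h' => absurd h' h⟩
  choose εfun hεpos hεav using hεex
  set Psum : (n : ℕ) → (Fin n → H) → (Fin n → Fin 3) → A :=
    fun n v δ => ∑ j : Fin n, ((((δ j : ℕ) : ℤ)) - 1) • φ (v j) with hPdef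
  set Rst : (n : ℕ) → (Fin n → H) → ℝ := fun n v =>
    Finset.univ.inf' Finset.univ_nonempty (fun δ : Fin n → Fin 3 => εfun (Psum n v δ)) with hRdef
  have hRpos : ∀ n v, 0 < Rst n v := by
    intro n v
    rw [hRdef, Finset.lt_inf'_iff]
    exact fun δ _ => hεpos _
  have hRle : ∀ n v δ, Rst n v ≤ εfun (Psum n v δ) :=
    fun n v δ => Finset.inf'_le _ (Finset.mem_univ δ)
  have hmulcont : ∀ R : ℝ, 0 < R →
      ∃ r : ℝ, 0 < r ∧ ∀ s t : H, dist s 1 < r → dist t 1 < r → dist (s * t⁻¹) 1 < R := by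
    intro R hR
    have hc : ContinuousAt (fun q : H × H => q.1 * q.2⁻¹) (1, 1) :=
      (continuous_fst.mul continuous_snd.inv).continuousAt
    rw [Metric.continuousAt_iff] at hc
    obtain ⟨δ, hδ, hh⟩ := hc R hR
    refine ⟨δ, hδ, fun s t h1 h2 => ?_⟩
    have hd : dist (s, t) ((1:H), (1:H)) < δ := by
      rw [Prod.dist_eq]
      exact max_lt h1 h2
    have := hh hd
    simpa using this
  have hrex := fun (n : ℕ) (v : Fin n → H) => hmulcont (Rst n v) (hRpos n v)
  choose rst hrst1 hrst2 using hrex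
  -- step sets
  set extv : (N : ℕ) → (Fin N → H) → (ℕ → H) :=
    fun N v j => if h : j < N then v ⟨j,h⟩ else 1 with hextvdef
  set exts : (N : ℕ) → (Fin N → Bool) → (ℕ → Bool) :=
    fun N s j => if h : j < N then s ⟨j,h⟩ else false with hextsdef
  set restr : (N : ℕ) → (Fin N → H) → (n : ℕ) → (Fin n → H) :=
    fun N v n j => if h : j.1 < N then v ⟨j.1,h⟩ else 1 with hrestrdef
  set Wf : (N : ℕ) → (Fin N → H) → ((Fin N → Bool) × Fin (N+1)) → H :=
    fun N v s => Qa (extv N v) (exts N s.1) s.2.1 (N - s.2.1) with hWfdef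
  set Φ : (N : ℕ) → (Fin N → H) → H → Prop := fun N v z =>
    φ z ≠ 0 ∧ ∀ s : (Fin N → Bool) × Fin (N+1), ∀ n, n ≤ N →
      (dist (Wf N v s) (Wf N v s * z) < rst n (restr N v n) * (1/2:ℝ)^(N + 2 - n)
        ∧ dist (Wf N v s) (Wf N v s * z) < (1/2:ℝ)^N) with hΦdef
  have hex : ∀ N v, ∃ z, Φ N v z := by
    intro N v
    set U : Set H := ⋂ s : (Fin N → Bool) × Fin (N+1), ⋂ n ∈ Finset.range (N+1),
      ({z : H | dist (Wf N v s) (Wf N v s * z) < rst n (restr N v n) * (1/2:ℝ)^(N + 2 - n)}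
        ∩ {z : H | dist (Wf N v s) (Wf N v s * z) < (1/2:ℝ)^N}) with hUdef
    have hUopen : IsOpen U := by
      apply isOpen_iInter_of_finite
      intro s
      apply isOpen_biInter_finset
      intro n _
      have hcont : Continuous (fun z : H => dist (Wf N v s) (Wf N v s * z)) :=
        continuous_const.dist (continuous_const.mul continuous_id)
      exact (isOpen_lt hcont continuous_const).inter (isOpen_lt hcont continuous_const)
    have hU1 : (1:H) ∈ U := by
      rw [hUdef]
      simp only [Set.mem_iInter, Set.mem_inter_iff, Set.mem_setOf_eq]
      intro s n hn
      rw [mul_one, dist_self]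
      constructor
      · have := hrst1 n (restr N v n)
        positivity
      · positivity
    obtain ⟨δ, hδ0, hball⟩ := Metric.isOpen_iff.mp hUopen 1 hU1
    obtain ⟨z, hz1, hz2⟩ := hones δ hδ0
    refine ⟨z, hz2, ?_⟩
    intro s n hn
    have hzU : z ∈ U := hball (Metric.mem_ball.mpr hz1)
    rw [hUdef] at hzU
    simp only [Set.mem_iInter, Set.mem_inter_iff, Set.mem_setOf_eq] at hzU
    exact hzU s n (Finset.mem_range.mpr (by omega))
  obtain ⟨Z, hZ⟩ := exists_adapted_seq Φ hex
  have hb : ∀ n, φ (Z n) ≠ 0 := fun n => (hZ n).1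
  -- translation of the step conditions
  have hrestrZ : ∀ N n, n ≤ N → restr N (fun k : Fin N => Z k.1) n = (fun j : Fin n => Z j.1) := by
    intro N n hn
    funext j
    rw [hrestrdef]
    simp only
    rw [dif_pos (lt_of_lt_of_le j.2 hn)]
  have hstep : ∀ (σ : ℕ → Bool) (n N : ℕ), n ≤ N →
      (dist (Qa Z σ n (N - n)) (Qa Z σ n (N - n) * Z N)
          < rst n (fun j : Fin n => Z j.1) * (1/2:ℝ)^(N + 2 - n)
        ∧ dist (Qa Z σ n (N - n)) (Qa Z σ n (N - n) * Z N) < (1/2:ℝ)^N) := by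
    intro σ n N hn
    have h := (hZ N).2 ⟨fun j : Fin N => σ j.1, ⟨n, by omega⟩⟩ n hn
    have hW : Wf N (fun k : Fin N => Z k.1) ⟨fun j : Fin N => σ j.1, ⟨n, by omega⟩⟩
        = Qa Z σ n (N - n) := by
      rw [hWfdef]
      simp only
      apply Qa_congr
      · intro j h1 h2
        rw [hextvdef]
        simp only
        rw [dif_pos (by omega : j < N)]
      · intro j h1 h2
        rw [hextsdef]
        simp only
        rw [dif_pos (by omega : j < N)]
    rw [hW, hrestrZ N n hn] at h
    exact h
  -- tails
  have hcau : ∀ (σ : ℕ → Bool) (n : ℕ), CauchySeq (fun k => Qa Z σ n k) := by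
    intro σ n
    apply cauchySeq_of_le_geometric (1/2 : ℝ) ((1/2:ℝ)^n) (by norm_num)
    intro k
    rw [Qa_succ]
    by_cases h : σ (n + k)
    · rw [if_pos h]
      have h2 := (hstep σ n (n+k) (by omega)).2
      have h3 : n + k - n = k := by omega
      rw [h3] at h2
      calc dist (Qa Z σ n k) (Qa Z σ n k * Z (n+k)) ≤ (1/2:ℝ)^(n+k) := le_of_lt h2
        _ = (1/2:ℝ)^n * (1/2:ℝ)^k := by rw [pow_add]
    · rw [if_neg h, mul_one, dist_self]
      positivity
  have hlim : ∀ (σ : ℕ → Bool) (n : ℕ), ∃ t : H, Tendsto (fun k => Qa Z σ n k) atTop (𝓝 t) :=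
    fun σ n => cauchySeq_tendsto_of_complete (hcau σ n)
  choose tl htl using hlim
  -- smallness of tails
  have hqd : ∀ (σ : ℕ → Bool) (n k : ℕ),
      dist 1 (Qa Z σ n k) ≤ rst n (fun j : Fin n => Z j.1) * ((1/2:ℝ) - (1/2:ℝ)^(k+1)) := by
    intro σ n k
    induction k with
    | zero =>
      show dist (1:H) 1 ≤ _
      rw [dist_self]
      norm_num
    | succ k ih =>
      have htr := dist_triangle (1:H) (Qa Z σ n k) (Qa Z σ n (k+1))
      have hrpos := hrst1 n (fun j : Fin n => Z j.1)
      have hstepk : dist (Qa Z σ n k) (Qa Z σ n (k+1))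
          ≤ rst n (fun j : Fin n => Z j.1) * (1/2:ℝ)^(k+2) := by
        rw [Qa_succ]
        by_cases h : σ (n + k)
        · rw [if_pos h]
          have h2 := (hstep σ n (n+k) (by omega)).1
          have h3 : n + k - n = k := by omega
          have h4 : n + k + 2 - n = k + 2 := by omega
          rw [h3, h4] at h2
          exact le_of_lt h2
        · rw [if_neg h, mul_one, dist_self]
          positivity
      have hfin : rst n (fun j : Fin n => Z j.1) * ((1/2:ℝ) - (1/2:ℝ)^(k+1))
          + rst n (fun j : Fin n => Z j.1) * (1/2:ℝ)^(k+2)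
          = rst n (fun j : Fin n => Z j.1) * ((1/2:ℝ) - (1/2:ℝ)^(k+2)) := by
        ring
      calc dist (1:H) (Qa Z σ n (k+1)) ≤ dist (1:H) (Qa Z σ n k) + dist (Qa Z σ n k) (Qa Z σ n (k+1)) := htr
        _ ≤ rst n (fun j : Fin n => Z j.1) * ((1/2:ℝ) - (1/2:ℝ)^(k+1))
            + rst n (fun j : Fin n => Z j.1) * (1/2:ℝ)^(k+2) := add_le_add ih hstepk
        _ = rst n (fun j : Fin n => Z j.1) * ((1/2:ℝ) - (1/2:ℝ)^(k+2)) := hfin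
  have hdt : ∀ (σ : ℕ → Bool) (n : ℕ),
      dist 1 (tl σ n) < rst n (fun j : Fin n => Z j.1) := by
    intro σ n
    have hle : dist 1 (tl σ n) ≤ rst n (fun j : Fin n => Z j.1) * (1/2:ℝ) := by
      have htd : Tendsto (fun k => dist (1:H) (Qa Z σ n k)) atTop (𝓝 (dist 1 (tl σ n))) :=
        tendsto_const_nhds.dist (htl σ n)
      apply le_of_tendsto htd
      apply Filter.Eventually.of_forall
      intro k
      have h1 := hqd σ n k
      have hrpos := hrst1 n (fun j : Fin n => Z j.1)
      nlinarith [pow_pos (by norm_num : (0:ℝ) < 1/2) (k+1)]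
    have hrpos := hrst1 n (fun j : Fin n => Z j.1)
    nlinarith
  -- decomposition
  have hdecomp : ∀ (σ : ℕ → Bool) (n : ℕ), tl σ 0 = Qa Z σ 0 n * tl σ n := by
    intro σ n
    have h1 : Tendsto (fun k => Qa Z σ 0 (n + k)) atTop (𝓝 (tl σ 0)) := by
      have := (htl σ 0).comp (tendsto_add_atTop_nat n)
      have he : ((fun k => Qa Z σ 0 k) ∘ (fun k => k + n)) = fun k => Qa Z σ 0 (n + k) := by
        funext k
        simp [Nat.add_comm]
      rwa [he] at this
    have h2 : Tendsto (fun k => Qa Z σ 0 n * Qa Z σ n k) atTop (𝓝 (Qa Z σ 0 n * tl σ n)) :=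
      tendsto_const_nhds.mul (htl σ n)
    have he2 : (fun k => Qa Z σ 0 (n + k)) = fun k => Qa Z σ 0 n * Qa Z σ n k := by
      funext k
      exact Qa_append Z σ n k
    rw [he2] at h1
    exact tendsto_nhds_unique h1 h2
  -- the injection
  refine ⟨fun σ => φ (tl σ 0), ?_⟩
  intro σ σ' hψ
  have hdiffsum : ∀ n, φ (tl σ n) - φ (tl σ' n)
      = ∑ j ∈ Finset.range n, (bitz' (σ' j) - bitz' (σ j)) • φ (Z j) := by
    intro n
    have e1 : φ (tl σ 0) = φ (Qa Z σ 0 n) + φ (tl σ n) := by rw [hdecomp σ n, hφ]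
    have e2 : φ (tl σ' 0) = φ (Qa Z σ' 0 n) + φ (tl σ' n) := by rw [hdecomp σ' n, hφ]
    have e3 : φ (tl σ n) - φ (tl σ' n) = φ (Qa Z σ' 0 n) - φ (Qa Z σ 0 n) := by
      have hψ' : φ (tl σ 0) = φ (tl σ' 0) := hψ
      rw [e1, e2] at hψ'
      rw [sub_eq_sub_iff_add_eq_add, add_comm (φ (tl σ n)) (φ (Qa Z σ 0 n))]
      exact hψ'
    rw [e3, phi_Qa φ hφ hφ1, phi_Qa φ hφ hφ1, ← Finset.sum_sub_distrib]
    apply Finset.sum_congr rfl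
    intro j _
    rw [Nat.zero_add]
    rcases Bool.eq_false_or_eq_true (σ' j) with h1 | h1 <;>
      rcases Bool.eq_false_or_eq_true (σ j) with h2 | h2 <;>
        simp [bitz', h1, h2]
  have hc0 : ∀ n, φ (tl σ n) - φ (tl σ' n) = 0 := by
    intro n
    by_contra hcv
    -- the witness element
    set zd := tl σ n * (tl σ' n)⁻¹ with hzddef
    have hφzd : φ zd = φ (tl σ n) - φ (tl σ' n) := by
      rw [hzddef, hφ, hφinv]
      abel
    have hzdsmall : dist zd 1 < Rst n (fun j : Fin n => Z j.1) := by
      apply hrst2 n (fun j : Fin n => Z j.1)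
      · rw [dist_comm]; exact hdt σ n
      · rw [dist_comm]; exact hdt σ' n
    -- encode as Psum
    set δenc : Fin n → Fin 3 := fun i =>
      if σ' i.1 then (if σ i.1 then ⟨1, by omega⟩ else ⟨2, by omega⟩)
      else (if σ i.1 then ⟨0, by omega⟩ else ⟨1, by omega⟩) with hδencdef
    have hPval : Psum n (fun j : Fin n => Z j.1) δenc = φ (tl σ n) - φ (tl σ' n) := by
      rw [hdiffsum n, hPdef]
      simp only
      rw [← Fin.sum_univ_eq_sum_range (fun j => (bitz' (σ' j) - bitz' (σ j)) • φ (Z j)) n]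
      apply Finset.sum_congr rfl
      intro j _
      congr 1
      rw [hδencdef]
      rcases Bool.eq_false_or_eq_true (σ' j.1) with h1 | h1 <;>
        rcases Bool.eq_false_or_eq_true (σ j.1) with h2 | h2 <;>
          simp [bitz', h1, h2]
    have hne := hεav _ hcv zd (lt_of_lt_of_le hzdsmall (hPval ▸ hRle n (fun j : Fin n => Z j.1) δenc))
    exact hne hφzd
  funext i
  have h1 := hdiffsum i
  have h2 := hdiffsum (i+1)
  rw [hc0 i] at h1
  rw [hc0 (i+1)] at h2
  rw [Finset.sum_range_succ, ← h1] at h2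
  have h3 : (bitz' (σ' i) - bitz' (σ i)) • φ (Z i) = 0 := by
    have h2' := h2.symm
    rwa [left_eq_add] at h2
  rcases Bool.eq_false_or_eq_true (σ i) with hh2 | hh2 <;>
    rcases Bool.eq_false_or_eq_true (σ' i) with hh1 | hh1
  · rw [hh1, hh2]
  · exfalso
    rw [hh1, hh2] at h3
    simp [bitz'] at h3
    exact hb i h3
  · exfalso
    rw [hh1, hh2] at h3
    simp [bitz'] at h3
    exact hb i h3
  · rw [hh1, hh2]

end Avoid


end ACproof

/-- If `A` is an abelian group of cardinality `< 2 ^ ℵ₀`, torsion-free and reduced,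
then every group homomorphism from a completely metrizable topological group to `A`
has open kernel. -/
theorem openKernel_of_reduced_torsionFree_small
    {A : Type*} [AddCommGroup A]
    (hcard : Cardinal.mk A < 2 ^ Cardinal.aleph0)
    (htf : ∀ a : A, ∀ n : ℕ, 1 ≤ n → n • a = 0 → a = 0)
    (hred : ∀ a : A, (∀ m : ℕ, 1 ≤ m → ∃ b : A, m • b = a) → a = 0)
    {H : Type*} [Group H] [tH : TopologicalSpace H] [IsTopologicalGroup H]
    (hH : ∃ mH : MetricSpace H,
      mH.toUniformSpace.toTopologicalSpace = tH ∧ @CompleteSpace H mH.toUniformSpace)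
    (φ : H → A) (hφ : ∀ x y : H, φ (x * y) = φ x + φ y) :
    IsOpen {x : H | φ x = 0} := by
  classical
  open ACproof in
  obtain ⟨mH, htop, hcomp⟩ := hH
  subst htop
  letI : MetricSpace H := mH
  haveI : CompleteSpace H := hcomp
  by_contra hker
  -- small elements with nonzero value
  have hones : ∀ ε : ℝ, 0 < ε → ∃ x : H, dist x 1 < ε ∧ φ x ≠ 0 := by
    by_contra hco
    push_neg at hco
    obtain ⟨ε, hε, hall⟩ := hco
    apply hker
    rw [Metric.isOpen_iff]
    intro y hy
    have hcy : ContinuousAt (fun z : H => y⁻¹ * z) y :=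
      (continuous_const.mul continuous_id).continuousAt
    rw [Metric.continuousAt_iff] at hcy
    obtain ⟨δ, hδ, hmap⟩ := hcy ε hε
    refine ⟨δ, hδ, fun z hz => ?_⟩
    have h1 : dist (y⁻¹ * z) (y⁻¹ * y) < ε := hmap (Metric.mem_ball.mp hz)
    rw [inv_mul_cancel] at h1
    have h2 : φ (y⁻¹ * z) = 0 := hall _ h1
    show φ z = 0
    have h3 : z = y * (y⁻¹ * z) := by group
    rw [h3, hφ, h2, add_zero]
    exact hy
  -- φ basics
  have hφ1 : φ 1 = 0 := by
    have := hφ 1 1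
    rw [mul_one] at this
    exact (left_eq_add.mp this)
  have hφpow : ∀ (x : H) (m : ℕ), φ (x ^ m) = m • φ x := by
    intro x m
    induction m with
    | zero => simpa using hφ1
    | succ m ih => rw [pow_succ, hφ, ih, succ_nsmul]
  have hφinv : ∀ t : H, φ t⁻¹ = - φ t := by
    intro t
    have := hφ t t⁻¹
    rw [mul_inv_cancel, hφ1] at this
    exact eq_neg_of_add_eq_zero_right (add_comm (φ t) (φ t⁻¹) ▸ this.symm)
  have hφzpow : ∀ (x : H) (k : ℤ), φ (x ^ k) = k • φ x := by
    intro x k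
    cases k with
    | ofNat m =>
      rw [Int.ofNat_eq_coe, zpow_natCast, hφpow, natCast_zsmul]
    | negSucc m =>
      rw [zpow_negSucc, hφinv, hφpow, negSucc_zsmul]
  -- attainable values near 1
  set Cmem : A → Prop := fun a => ∀ ε : ℝ, 0 < ε → ∃ x : H, dist x 1 < ε ∧ φ x = a with hCdef
  have hzs : ∀ (k : ℤ) (a : A), Cmem a → Cmem (k • a) := by
    intro k a ha ε hε
    have hc : ContinuousAt (fun h : H => h ^ k) 1 := (continuous_zpow k).continuousAt
    rw [Metric.continuousAt_iff] at hc
    obtain ⟨δ, hδ, hmap⟩ := hc ε hε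
    obtain ⟨x, hx1, hx2⟩ := ha δ hδ
    refine ⟨x ^ k, ?_, by rw [hφzpow, hx2]⟩
    have := hmap hx1
    rwa [one_zpow] at this
  have hchainC : ∀ γ : ℕ → A, (∀ n, Cmem (γ n)) →
      ∃ ξ : ℕ → A, ∀ n, ξ n = γ n + (((n+1 : ℕ)) : ℤ) • ξ (n+1) :=
    fun γ hγ => chain_machine φ hφ γ (fun n ε hε => hγ n ε hε)
  have hpigeon : ∀ g : (ℕ → Bool) → A, ∃ t t', t ≠ t' ∧ g t = g t' :=
    fun g => no_continuum_inj hcard g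
  have hC0 : ∀ a, Cmem a → a = 0 :=
    fun a ha => inC_eq_zero Cmem htf hred hchainC hzs hpigeon ha
  have havoid : ∀ a : A, a ≠ 0 → ∃ ε : ℝ, 0 < ε ∧ ∀ x : H, dist x 1 < ε → φ x ≠ a := by
    intro a ha
    by_contra hco
    push_neg at hco
    refine ha (hC0 a ?_)
    intro ε hε
    obtain ⟨x, h1, h2⟩ := hco ε hε
    exact ⟨x, h1, h2⟩
  obtain ⟨ψ, hψ⟩ := avoid_machine φ hφ htf hones havoid
  obtain ⟨t, t', hne, heq⟩ := no_continuum_inj hcard ψ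
  exact hne (hψ heq)
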